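/- arXiv:2306.08139 — 4 statements merged into one kernel-verified Lean document; each statement's English description precedes it below -/
import Mathlib

section
/- Let r > 0 and u(x) = ∫₀^{|x|} max(s² - r², 0)^{1/2} ds on ℝ². Then u is continuously differentiable on ℝ², and its gradient satisfies the Hölder estimate |∇u(x) - ∇u(y)| ≤ C |x - y|^{1/2} for all x, y in the closed annulus {r ≤ |x| ≤ 2r}, where C depends only on r. -/
open Real

noncomputable def mf (r s : ℝ) : ℝ := Real.sqrt (max (s ^ 2 - r ^ 2) 0)

lemma mf_cont (r : ℝ) : Continuous (mf r) :=
  Real.continuous_sqrt.comp (((continuous_pow 2).sub continuous_const).max continuous_const)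

noncomputable def mg (r t : ℝ) : ℝ := ∫ s in (0:ℝ)..t, mf r s

lemma mg_hasDerivAt (r t : ℝ) : HasDerivAt (mg r) (mf r t) t :=
  ((mf_cont r).integral_hasStrictDerivAt 0 t).hasDerivAt

lemma mg_contDiff (r : ℝ) : ContDiff ℝ 1 (mg r) := by
  rw [contDiff_one_iff_deriv]
  refine ⟨fun t => (mg_hasDerivAt r t).differentiableAt, ?_⟩
  have : deriv (mg r) = mf r := funext fun t => (mg_hasDerivAt r t).deriv
  rw [this]; exact mf_cont r

notation "E2" => EuclideanSpace ℝ (Fin 2)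

lemma mu_hasGradientAt (r : ℝ) {x : E2} (hx : x ≠ 0) :
    HasGradientAt (fun z : E2 => mg r ‖z‖) ((mf r ‖x‖ / ‖x‖) • x) x := by
  have hn : ‖x‖ ≠ 0 := norm_ne_zero_iff.2 hx
  have h1 : HasFDerivAt (fun z : E2 => ‖z‖ ^ 2) (2 • (innerSL ℝ x)) x :=
    (hasStrictFDerivAt_norm_sq x).hasFDerivAt
  have h2 : HasFDerivAt (fun z : E2 => Real.sqrt (‖z‖ ^ 2))
      ((1 / (2 * Real.sqrt (‖x‖ ^ 2))) • (2 • (innerSL ℝ x))) x :=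
    (Real.hasDerivAt_sqrt (pow_ne_zero 2 hn)).comp_hasFDerivAt x h1
  have hsq : ∀ z : E2, Real.sqrt (‖z‖ ^ 2) = ‖z‖ := fun z => Real.sqrt_sq (norm_nonneg z)
  have h3 : HasFDerivAt (fun z : E2 => ‖z‖) (‖x‖⁻¹ • (innerSL ℝ x)) x := by
    have := h2.congr_of_eventuallyEq (Filter.Eventually.of_forall fun z => (hsq z).symm)
    refine this.congr_fderiv ?_
    rw [hsq x]
    ext y
    simp only [ContinuousLinearMap.smul_apply, smul_eq_mul, ContinuousLinearMap.coe_smul',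
      Pi.smul_apply]
    field_simp
    ring
  have h4 : HasFDerivAt (fun z : E2 => mg r ‖z‖)
      ((mf r ‖x‖) • (‖x‖⁻¹ • (innerSL ℝ x))) x :=
    (mg_hasDerivAt r ‖x‖).comp_hasFDerivAt x h3
  rw [hasGradientAt_iff_hasFDerivAt]
  refine h4.congr_fderiv ?_
  ext y
  simp [InnerProductSpace.toDual_apply_apply, inner_smul_left, real_inner_comm]
  ring

lemma mu_contDiff (r : ℝ) (hr : 0 < r) : ContDiff ℝ 1 (fun z : E2 => mg r ‖z‖) := by
  rw [contDiff_iff_contDiffAt]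
  intro x
  rcases eq_or_ne x 0 with rfl | hx
  · -- locally zero
    have hzero : ∀ z : E2, ‖z‖ < r → mg r ‖z‖ = 0 := by
      intro z hz
      have : ∀ s ∈ Set.uIcc (0:ℝ) ‖z‖, mf r s = 0 := by
        intro s hs
        rw [Set.uIcc_of_le (norm_nonneg z)] at hs
        have h1 : s ^ 2 ≤ ‖z‖ ^ 2 := by
          have := abs_le_abs hs.2 (neg_le_of_neg_le (by linarith [hs.1, norm_nonneg z]))
          nlinarith [hs.1, hs.2, norm_nonneg z]
        have : s ^ 2 - r ^ 2 ≤ 0 := by nlinarith [norm_nonneg z, hz]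
        simp [mf, max_eq_right this]
      unfold mg
      rw [intervalIntegral.integral_congr this]
      simp
    have : (fun z : E2 => mg r ‖z‖) =ᶠ[nhds 0] fun _ => (0:ℝ) := by
      filter_upwards [Metric.ball_mem_nhds (0:E2) hr] with z hz
      exact hzero z (by simpa using hz)
    exact (contDiffAt_const (c := (0:ℝ))).congr_of_eventuallyEq this
  · exact ((mg_contDiff r).contDiffAt).comp x (contDiffAt_norm ℝ hx)

lemma sqrt_holder {u v : ℝ} (hu : 0 ≤ u) (hv : 0 ≤ v) :
    |Real.sqrt u - Real.sqrt v| ≤ Real.sqrt |u - v| := by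
  wlog h : v ≤ u generalizing u v
  · rw [abs_sub_comm, abs_sub_comm u v]; exact this hv hu (le_of_not_ge h)
  have h1 : Real.sqrt u ≤ Real.sqrt (u - v) + Real.sqrt v := by
    refine Real.sqrt_le_iff.2 ⟨by positivity, ?_⟩
    nlinarith [Real.sq_sqrt hv, Real.sq_sqrt (sub_nonneg.2 h), Real.sqrt_nonneg v,
      Real.sqrt_nonneg (u - v)]
  rw [abs_of_nonneg (sub_nonneg.2 (Real.sqrt_le_sqrt h)), abs_of_nonneg (sub_nonneg.2 h)]
  linarith

set_option maxHeartbeats 1000000 in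
/-- The model potential `u(x) = ∫₀^{‖x‖} (s² - r²)₊^{1/2} ds` is `C¹` on `ℝ²` and its
gradient is `1/2`-Hölder on the closed annulus `{r ≤ ‖x‖ ≤ 2r}`, with constant
depending only on `r`. -/
theorem stmt1 (r : ℝ) (hr : 0 < r) :
    ContDiff ℝ 1 (fun x : EuclideanSpace ℝ (Fin 2) =>
        ∫ s in (0:ℝ)..‖x‖, Real.sqrt (max (s ^ 2 - r ^ 2) 0)) ∧
    ∃ C > 0, ∀ x y : EuclideanSpace ℝ (Fin 2),
      r ≤ ‖x‖ → ‖x‖ ≤ 2 * r → r ≤ ‖y‖ → ‖y‖ ≤ 2 * r →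
      ‖gradient (fun z : EuclideanSpace ℝ (Fin 2) =>
            ∫ s in (0:ℝ)..‖z‖, Real.sqrt (max (s ^ 2 - r ^ 2) 0)) x -
        gradient (fun z : EuclideanSpace ℝ (Fin 2) =>
            ∫ s in (0:ℝ)..‖z‖, Real.sqrt (max (s ^ 2 - r ^ 2) 0)) y‖
        ≤ C * ‖x - y‖ ^ ((1:ℝ) / 2) := by
  have hfun : (fun x : E2 => ∫ s in (0:ℝ)..‖x‖, Real.sqrt (max (s ^ 2 - r ^ 2) 0))
      = fun x : E2 => mg r ‖x‖ := rfl
  rw [hfun]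
  refine ⟨mu_contDiff r hr, 16 * Real.sqrt r, by positivity, ?_⟩
  intro x y hx1 hx2 hy1 hy2
  have hxne : x ≠ 0 := fun h => by rw [h, norm_zero] at hx1; linarith
  have hyne : y ≠ 0 := fun h => by rw [h, norm_zero] at hy1; linarith
  rw [(mu_hasGradientAt r hxne).gradient, (mu_hasGradientAt r hyne).gradient]
  set a := ‖x‖ with ha'
  set b := ‖y‖ with hb'
  set d := ‖x - y‖ with hd'
  have ha : 0 < a := lt_of_lt_of_le hr hx1
  have hb : 0 < b := lt_of_lt_of_le hr hy1
  have hd0 : 0 ≤ d := norm_nonneg _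
  set sd := Real.sqrt d with hsd'
  set sr := Real.sqrt r with hsr'
  have hsd0 : 0 ≤ sd := Real.sqrt_nonneg _
  have hsr0 : 0 < sr := Real.sqrt_pos.2 hr
  have hsd2 : sd ^ 2 = d := Real.sq_sqrt hd0
  have hsr2 : sr ^ 2 = r := Real.sq_sqrt hr.le
  have hab : |a - b| ≤ d := abs_norm_sub_norm_le x y
  have hd4r : d ≤ 4 * r := by
    have h := norm_sub_le x y
    rw [← ha', ← hb', ← hd'] at h
    linarith
  clear_value sd sr
  clear_value d
  clear_value a b
  -- mf values
  have hfa : mf r a = Real.sqrt (a ^ 2 - r ^ 2) := by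
    rw [mf, max_eq_left (by nlinarith)]
  have hfb : mf r b = Real.sqrt (b ^ 2 - r ^ 2) := by
    rw [mf, max_eq_left (by nlinarith)]
  have hfa0 : 0 ≤ mf r a := Real.sqrt_nonneg _
  have hfb0 : 0 ≤ mf r b := Real.sqrt_nonneg _
  have hfa_le : mf r a ≤ 2 * r := by
    rw [hfa]; exact Real.sqrt_le_iff.2 ⟨by linarith, by nlinarith⟩
  have hfb_le : mf r b ≤ 2 * r := by
    rw [hfb]; exact Real.sqrt_le_iff.2 ⟨by linarith, by nlinarith⟩
  -- Hölder bound on mf difference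
  have hdiff : |mf r a - mf r b| ≤ 2 * sr * sd := by
    rw [hfa, hfb]
    refine (sqrt_holder (by nlinarith) (by nlinarith)).trans ?_
    refine Real.sqrt_le_iff.2 ⟨by positivity, ?_⟩
    have h1 : |a ^ 2 - r ^ 2 - (b ^ 2 - r ^ 2)| = |a - b| * (a + b) := by
      rw [show a ^ 2 - r ^ 2 - (b ^ 2 - r ^ 2) = (a - b) * (a + b) by ring,
        abs_mul, abs_of_pos (show (0:ℝ) < a + b by linarith)]
    rw [h1]
    calc |a - b| * (a + b) ≤ d * (4 * r) := by
          apply mul_le_mul hab (by linarith) (by linarith) hd0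
      _ = (2 * sr * sd) ^ 2 := by rw [← hsd2, ← hsr2]; ring
  -- decomposition
  have key : (mf r a / a) • x - (mf r b / b) • y
      = (mf r a / a) • (x - y) + ((mf r a / a) - (mf r b / b)) • y := by
    rw [smul_sub, sub_smul]; abel
  rw [key]
  have hφa : mf r a / a ≤ 2 := by
    rw [div_le_iff₀ ha]; nlinarith
  have hφa0 : 0 ≤ mf r a / a := div_nonneg hfa0 ha.le
  have e1 : mf r a / a - mf r b / b
      = (mf r a - mf r b) / a + mf r b / (a * b) * (b - a) := by
    field_simp; ring
  have habs : |mf r a / a - mf r b / b| ≤ |mf r a - mf r b| / r + 2 / r * d := by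
    rw [e1]
    refine (abs_add_le _ _).trans (add_le_add ?_ ?_)
    · rw [abs_div, abs_of_pos ha]
      exact div_le_div_of_nonneg_left (abs_nonneg _) hr hx1
    · rw [abs_mul, abs_div, abs_of_nonneg hfb0, abs_of_pos (by positivity : (0:ℝ) < a * b)]
      have h2 : mf r b / (a * b) ≤ 2 / r := by
        rw [div_le_div_iff₀ (by positivity) hr]
        nlinarith
      have h3 : |b - a| ≤ d := by rwa [abs_sub_comm]
      exact mul_le_mul h2 h3 (abs_nonneg _) (by positivity)
  -- put together
  have hstep : ‖(mf r a / a) • (x - y) + ((mf r a / a) - (mf r b / b)) • y‖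
      ≤ 2 * d + (|mf r a - mf r b| / r + 2 / r * d) * b := by
    refine (norm_add_le _ _).trans (add_le_add ?_ ?_)
    · rw [norm_smul, Real.norm_eq_abs, abs_of_nonneg hφa0, ← hd']
      exact mul_le_mul_of_nonneg_right hφa hd0
    · rw [norm_smul, Real.norm_eq_abs, ← hb']
      exact mul_le_mul_of_nonneg_right habs hb.le
  refine hstep.trans ?_
  rw [← Real.sqrt_eq_rpow, ← hsd']
  -- scalar arithmetic: 2d + (|Δ|/r + 2/r d) * b ≤ 16 sr sd
  have hsd_le : sd ≤ 2 * sr := by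
    have h4 : Real.sqrt (4 * r) = 2 * Real.sqrt r := by
      rw [show (4:ℝ) * r = (2 * Real.sqrt r) ^ 2 by
        rw [mul_pow, Real.sq_sqrt hr.le]; ring, Real.sqrt_sq (by positivity)]
    rw [hsd', hsr', ← h4]
    exact Real.sqrt_le_sqrt hd4r
  have hd_le : d ≤ 2 * sr * sd := by
    have := mul_le_mul_of_nonneg_right hsd_le hsd0
    nlinarith
  have hΔ : |mf r a - mf r b| ≥ 0 := abs_nonneg _
  have hbound : (|mf r a - mf r b| / r + 2 / r * d) * b
      ≤ 2 * |mf r a - mf r b| + 4 * d := by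
    have h1 : |mf r a - mf r b| / r * b ≤ 2 * |mf r a - mf r b| := by
      rw [div_mul_eq_mul_div, div_le_iff₀ hr]
      nlinarith [abs_nonneg (mf r a - mf r b)]
    have h2 : 2 / r * d * b ≤ 4 * d := by
      rw [div_mul_eq_mul_div, div_mul_eq_mul_div, div_le_iff₀ hr]; nlinarith
    have hexp := add_mul (|mf r a - mf r b| / r) (2 / r * d) b
    linarith
  linarith [hdiff, hd_le, hbound]
end

section
/- Let r > 0 and u(x) = ∫₀^{|x|} max(s² - r², 0)^{1/2} ds on ℝ². For every p with 1 ≤ p < 2, the function x ↦ the radial second derivative ∂²u/∂ρ² = |x| / (|x|² - r²)^{1/2} is in L^p of the annulus {r < |x| < 2r}, but it is not in L² of that annulus. -/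
open MeasureTheory Set Real

noncomputable def e2 : EuclideanSpace ℝ (Fin 2) ≃ᵐ ℝ × ℝ :=
  (MeasurableEquiv.toLp 2 (Fin 2 → ℝ)).symm.trans MeasurableEquiv.finTwoArrow

lemma e2_mp : MeasurePreserving e2 volume volume :=
  (volume_preserving_finTwoArrow ℝ).comp
    (EuclideanSpace.volume_preserving_symm_measurableEquiv_toLp (Fin 2))

lemma norm_e2 (x : EuclideanSpace ℝ (Fin 2)) :
    ‖x‖ = Real.sqrt ((e2 x).1 ^ 2 + (e2 x).2 ^ 2) := by
  rw [EuclideanSpace.norm_eq]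
  simp [e2, Fin.sum_univ_two, MeasurableEquiv.coe_toLp_symm, MeasurableEquiv.finTwoArrow,
    Real.norm_eq_abs, sq_abs]

lemma radial_iff (f : ℝ → ℝ) (hf : Measurable f) {a b : ℝ} (ha : 0 < a) :
    IntegrableOn (fun x : EuclideanSpace ℝ (Fin 2) => f ‖x‖)
      {x : EuclideanSpace ℝ (Fin 2) | a < ‖x‖ ∧ ‖x‖ < b} volume ↔
    IntegrableOn (fun y => y * f y) (Ioo a b) volume := by
  set N : ℝ × ℝ → ℝ := fun p => Real.sqrt (p.1 ^ 2 + p.2 ^ 2) with hN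
  have hNc : Continuous N := (((continuous_fst.pow 2).add (continuous_snd.pow 2)).sqrt)
  set A : Set (ℝ × ℝ) := {p | a < N p ∧ N p < b} with hA
  have hAm : MeasurableSet A :=
    (measurableSet_lt measurable_const hNc.measurable).inter
      (measurableSet_lt hNc.measurable measurable_const)
  -- Step 1: transfer to ℝ × ℝ
  have step1 : IntegrableOn (fun x : EuclideanSpace ℝ (Fin 2) => f ‖x‖)
      {x : EuclideanSpace ℝ (Fin 2) | a < ‖x‖ ∧ ‖x‖ < b} volume ↔
      IntegrableOn (fun p => f (N p)) A volume := by
    have hpre : e2 ⁻¹' A = {x : EuclideanSpace ℝ (Fin 2) | a < ‖x‖ ∧ ‖x‖ < b} := by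
      ext x; simp [A, norm_e2 x, N]
    have h2 := (e2_mp.restrict_preimage hAm).integrable_comp_emb e2.measurableEmbedding
      (g := fun p => f (N p))
    have hcomp : ((fun p => f (N p)) ∘ ⇑e2) = fun x : EuclideanSpace ℝ (Fin 2) => f ‖x‖ := by
      ext x; simp [norm_e2 x, N]
    rw [hpre, hcomp] at h2
    exact h2
  rw [step1]
  -- Step 2: A is a.e. equal to polarCoord.symm '' s
  set s : Set (ℝ × ℝ) := Ioo a b ×ˢ Ioo (-π) π with hs
  have hsub : s ⊆ polarCoord.target := by
    rintro ⟨ρ, θ⟩ ⟨h1, h2⟩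
    exact ⟨lt_trans ha h1.1, h2⟩
  have hNsymm : ∀ q ∈ polarCoord.target, N (polarCoord.symm q) = q.1 := by
    rintro ⟨ρ, θ⟩ hq
    have hρ : (0:ℝ) < ρ := hq.1
    simp only [N, polarCoord_symm_apply]
    rw [mul_pow, mul_pow, ← mul_add, add_comm ((cos θ)^2), sin_sq_add_cos_sq, mul_one,
      Real.sqrt_sq hρ.le]
  have himg : polarCoord.symm '' s = A ∩ polarCoord.source := by
    ext p
    constructor
    · rintro ⟨q, hq, rfl⟩
      refine ⟨⟨?_, ?_⟩, polarCoord.map_target (hsub hq)⟩ <;>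
        rw [hNsymm q (hsub hq)]
      exacts [hq.1.1, hq.1.2]
    · rintro ⟨hpA, hps⟩
      refine ⟨polarCoord p, ⟨?_, (polarCoord.map_source hps).2⟩, polarCoord.left_inv hps⟩
      have h1 : N (polarCoord.symm (polarCoord p)) = (polarCoord p).1 :=
        hNsymm _ (polarCoord.map_source hps)
      rw [polarCoord.left_inv hps] at h1
      rw [← h1]; exact hpA
  have haeeq : (A ∩ polarCoord.source : Set (ℝ × ℝ)) =ᵐ[volume] A := by
    exact MeasureTheory.inter_ae_eq_left_of_ae_eq_univ polarCoord_source_ae_eq_univ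
  have step2 : IntegrableOn (fun p => f (N p)) A volume ↔
      IntegrableOn (fun p => f (N p)) (polarCoord.symm '' s) volume := by
    unfold IntegrableOn
    rw [himg, Measure.restrict_congr_set haeeq]
  rw [step2]
  -- Step 3: change of variables
  set B : ℝ × ℝ → ℝ × ℝ →L[ℝ] ℝ × ℝ := fun p =>
    LinearMap.toContinuousLinearMap (Matrix.toLin (Module.Basis.finTwoProd ℝ) (Module.Basis.finTwoProd ℝ)
      !![cos p.2, -p.1 * sin p.2; sin p.2, p.1 * cos p.2]) with hB
  have B_det : ∀ p, (B p).det = p.1 := by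
    intro p
    conv_rhs => rw [← one_mul p.1, ← cos_sq_add_sin_sq p.2]
    simp only [B, neg_mul, LinearMap.det_toContinuousLinearMap, LinearMap.det_toLin,
      Matrix.det_fin_two_of, sub_neg_eq_add]
    ring
  have hsm : MeasurableSet s := measurableSet_Ioo.prod measurableSet_Ioo
  have hderiv : ∀ p ∈ s, HasFDerivWithinAt polarCoord.symm (B p) s p := fun p _ =>
    (hasFDerivAt_polarCoord_symm p).hasFDerivWithinAt
  have hinj : InjOn polarCoord.symm s :=
    polarCoord.symm.injOn.mono (by rw [OpenPartialHomeomorph.symm_source]; exact hsub)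
  have step3 := integrableOn_image_iff_integrableOn_abs_det_fderiv_smul volume hsm hderiv hinj
    (fun p => f (N p))
  rw [step3]
  -- Step 4: simplify the integrand on s
  have step4 : IntegrableOn (fun p => |(B p).det| • f (N (polarCoord.symm p))) s volume ↔
      IntegrableOn (fun p : ℝ × ℝ => p.1 * f p.1) s volume := by
    apply integrableOn_congr_fun_ae
    filter_upwards [ae_restrict_mem hsm] with p hp
    rw [B_det, hNsymm p (hsub hp), abs_of_pos (lt_trans ha hp.1.1), smul_eq_mul]
  rw [step4]
  -- Step 5: Fubini-type reduction
  have hprod : (volume : Measure (ℝ × ℝ)).restrict s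
      = (volume.restrict (Ioo a b)).prod (volume.restrict (Ioo (-π) π)) := by
    rw [hs, Measure.volume_eq_prod, Measure.prod_restrict]
  constructor
  · intro h
    rw [IntegrableOn, hprod] at h
    have hne : (volume.restrict (Ioo (-π) π) : Measure ℝ) ≠ 0 := by
      intro h0
      have : (volume.restrict (Ioo (-π) π) : Measure ℝ) univ = 0 := by rw [h0]; simp
      rw [Measure.restrict_apply_univ, Real.volume_Ioo] at this
      simp only [ENNReal.ofReal_eq_zero, sub_neg_eq_add] at this
      linarith [Real.pi_pos]
    have h3 := h.prod_left_ae
    haveI : (ae (volume.restrict (Ioo (-π) π))).NeBot := ae_neBot.mpr hne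
    obtain ⟨y, hy⟩ := h3.exists
    simpa [IntegrableOn] using hy
  · intro h
    rw [IntegrableOn, hprod]
    have h1 : Integrable (fun θ : ℝ => (1:ℝ)) (volume.restrict (Ioo (-π) π)) :=
      integrable_const 1
    have := h.mul_prod h1
    simpa using this

lemma shift_iff (g : ℝ → ℝ) (r : ℝ) :
    IntegrableOn (fun y => g (y - r)) (Ioo r (2 * r)) volume ↔
      IntegrableOn g (Ioo 0 r) volume := by
  have mp := measurePreserving_add_right (volume : Measure ℝ) r
  have emb : MeasurableEmbedding (fun x : ℝ => x + r) :=
    (Homeomorph.addRight r).measurableEmbedding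
  have hpre : (fun x : ℝ => x + r) ⁻¹' Ioo r (2 * r) = Ioo 0 r := by
    ext x
    simp only [mem_preimage, mem_Ioo]
    constructor <;> rintro ⟨h1, h2⟩ <;> constructor <;> linarith
  have h := (mp.restrict_preimage (s := Ioo r (2*r)) measurableSet_Ioo).integrable_comp_emb emb
    (g := fun y => g (y - r))
  rw [hpre] at h
  have hcomp : ((fun y => g (y - r)) ∘ fun x : ℝ => x + r) = g := by ext x; simp
  rw [hcomp] at h
  exact h.symm

/-- The radial second derivative `‖x‖ / √(‖x‖² - r²)` of the model potential is in
`Lᵖ` of the annulus `{r < ‖x‖ < 2r}` for every `1 ≤ p < 2`, but not in `L²`. -/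
theorem stmt2 (r : ℝ) (hr : 0 < r) :
    (∀ p : ℝ, 1 ≤ p → p < 2 →
      IntegrableOn
        (fun x : EuclideanSpace ℝ (Fin 2) =>
          (‖x‖ / Real.sqrt (‖x‖ ^ 2 - r ^ 2)) ^ p)
        {x : EuclideanSpace ℝ (Fin 2) | r < ‖x‖ ∧ ‖x‖ < 2 * r} volume) ∧
    ¬ IntegrableOn
        (fun x : EuclideanSpace ℝ (Fin 2) =>
          (‖x‖ / Real.sqrt (‖x‖ ^ 2 - r ^ 2)) ^ (2:ℝ))
        {x : EuclideanSpace ℝ (Fin 2) | r < ‖x‖ ∧ ‖x‖ < 2 * r} volume := by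
  constructor
  · intro p hp1 hp2
    have hp0 : (0:ℝ) ≤ p := by linarith
    have hf : Measurable fun y : ℝ => (y / Real.sqrt (y ^ 2 - r ^ 2)) ^ p := by fun_prop
    refine (radial_iff (fun y => (y / Real.sqrt (y ^ 2 - r ^ 2)) ^ p) hf hr (b := 2*r)).mpr ?_
    set c : ℝ := 2 * r / Real.sqrt (2 * r) with hc
    have hc0 : 0 ≤ c := by positivity
    have hbound : ∀ y ∈ Ioo r (2 * r),
        y * (y / Real.sqrt (y ^ 2 - r ^ 2)) ^ p ≤ 2 * r * c ^ p * (y - r) ^ (-(p/2)) := by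
      intro y hy
      obtain ⟨hy1, hy2⟩ := hy
      have hy0 : 0 < y := hr.trans hy1
      have hyr : 0 < y - r := by linarith
      have hsq : 2 * r * (y - r) ≤ y ^ 2 - r ^ 2 := by nlinarith
      have hsqrt : Real.sqrt (2 * r) * Real.sqrt (y - r) ≤ Real.sqrt (y ^ 2 - r ^ 2) := by
        rw [← Real.sqrt_mul (by positivity)]
        exact Real.sqrt_le_sqrt hsq
      have hs2 : 0 < Real.sqrt (2 * r) * Real.sqrt (y - r) := by positivity
      have hbase : y / Real.sqrt (y ^ 2 - r ^ 2) ≤ c * (y - r) ^ (-(1/2) : ℝ) := by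
        have h1 : y / Real.sqrt (y ^ 2 - r ^ 2) ≤ 2 * r / (Real.sqrt (2*r) * Real.sqrt (y-r)) :=
          div_le_div₀ (by positivity) hy2.le hs2 hsqrt
        have h2 : 2 * r / (Real.sqrt (2*r) * Real.sqrt (y-r)) = c * (y - r) ^ (-(1/2) : ℝ) := by
          rw [Real.rpow_neg hyr.le, ← Real.sqrt_eq_rpow, ← div_eq_mul_inv, hc, div_div]
        linarith
      have hb0 : 0 ≤ y / Real.sqrt (y ^ 2 - r ^ 2) := by positivity
      have h3 : (y / Real.sqrt (y ^ 2 - r ^ 2)) ^ p ≤ (c * (y - r) ^ (-(1/2):ℝ)) ^ p :=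
        Real.rpow_le_rpow hb0 hbase hp0
      have h4 : (c * (y - r) ^ (-(1/2):ℝ)) ^ p = c ^ p * (y - r) ^ (-(p/2)) := by
        rw [Real.mul_rpow hc0 (Real.rpow_nonneg hyr.le _), ← Real.rpow_mul hyr.le]
        congr 1
        ring
      calc y * (y / Real.sqrt (y ^ 2 - r ^ 2)) ^ p
          ≤ (2 * r) * (c ^ p * (y - r) ^ (-(p/2))) := by
            apply mul_le_mul hy2.le (h3.trans_eq h4) (Real.rpow_nonneg hb0 p) (by positivity)
        _ = 2 * r * c ^ p * (y - r) ^ (-(p/2)) := by ring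
    have hshift : IntegrableOn (fun y : ℝ => (y - r) ^ (-(p/2))) (Ioo r (2*r)) volume :=
      (shift_iff (fun x : ℝ => x ^ (-(p/2))) r).mpr
        (by rw [intervalIntegral.integrableOn_Ioo_rpow_iff hr]; linarith)
    have hbint : IntegrableOn (fun y => 2 * r * c ^ p * (y - r) ^ (-(p/2))) (Ioo r (2*r))
        volume := hshift.const_mul _
    have hm : Measurable fun y : ℝ => y * (y / Real.sqrt (y ^ 2 - r ^ 2)) ^ p := by fun_prop
    apply Integrable.mono' hbint hm.aestronglyMeasurable
    filter_upwards [ae_restrict_mem measurableSet_Ioo] with y hy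
    have hy0 : (0:ℝ) ≤ y := (hr.trans hy.1).le
    rw [Real.norm_eq_abs, abs_of_nonneg
      (mul_nonneg hy0 (Real.rpow_nonneg (div_nonneg hy0 (Real.sqrt_nonneg _)) p))]
    exact hbound y hy
  · intro hInt
    have hf : Measurable fun y : ℝ => (y / Real.sqrt (y ^ 2 - r ^ 2)) ^ (2:ℝ) := by fun_prop
    have h := (radial_iff (fun y => (y / Real.sqrt (y ^ 2 - r ^ 2)) ^ (2:ℝ)) hf hr
      (b := 2*r)).mp hInt
    have hlow : ∀ y ∈ Ioo r (2 * r),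
        r ^ 2 / 3 * (y - r)⁻¹ ≤ y * (y / Real.sqrt (y ^ 2 - r ^ 2)) ^ (2:ℝ) := by
      intro y hy
      obtain ⟨hy1, hy2⟩ := hy
      have hy0 : 0 < y := hr.trans hy1
      have hyr : 0 < y - r := by linarith
      have hpos : 0 < y ^ 2 - r ^ 2 := by nlinarith
      have h2 : (y / Real.sqrt (y ^ 2 - r ^ 2)) ^ (2:ℝ) = y ^ 2 / (y ^ 2 - r ^ 2) := by
        rw [show (2:ℝ) = ((2:ℕ):ℝ) by norm_num, Real.rpow_natCast, div_pow,
          Real.sq_sqrt hpos.le]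
      rw [h2, show y * (y ^ 2 / (y ^ 2 - r ^ 2)) = y ^ 3 / (y ^ 2 - r ^ 2) by ring,
        show r ^ 2 / 3 * (y - r)⁻¹ = r ^ 2 / (3 * (y - r)) by rw [div_mul_eq_div_div_swap]; ring_nf,
        div_le_div_iff₀ (by positivity) hpos]
      nlinarith [sq_nonneg (y - r), sq_nonneg y]
    have hlint : IntegrableOn (fun y => r ^ 2 / 3 * (y - r)⁻¹) (Ioo r (2 * r)) volume := by
      apply Integrable.mono' h
        ((measurable_const.mul (measurable_id.sub_const r).inv).aestronglyMeasurable)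
      filter_upwards [ae_restrict_mem measurableSet_Ioo] with y hy
      have hyr : 0 < y - r := by have := hy.1; linarith
      show ‖r ^ 2 / 3 * (y - r)⁻¹‖ ≤ _
      rw [Real.norm_eq_abs, abs_of_nonneg (by positivity)]
      exact hlow y hy
    have hinv : IntegrableOn (fun y => (y - r)⁻¹) (Ioo r (2 * r)) volume := by
      have h5 := hlint.const_mul (3 / r ^ 2)
      have hc1 : 3 / r ^ 2 * (r ^ 2 / 3) = 1 := by field_simp
      have : (fun y => 3 / r ^ 2 * (r ^ 2 / 3 * (y - r)⁻¹)) = fun y => (y - r)⁻¹ := by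
        ext y; rw [← mul_assoc, hc1, one_mul]
      rwa [this] at h5
    rw [show (fun y : ℝ => (y - r)⁻¹) = fun y => (fun x : ℝ => x⁻¹) (y - r) from rfl,
      shift_iff (fun x : ℝ => x⁻¹) r] at hinv
    have h4 : IntegrableOn (fun x : ℝ => x ^ (-1:ℝ)) (Ioo 0 r) volume := by
      simpa [Real.rpow_neg_one] using hinv
    rw [intervalIntegral.integrableOn_Ioo_rpow_iff hr] at h4
    linarith
end

section
/- There is no C² convex function w on the unit ball B₁ ⊂ ℝ² satisfying det D²w ≥ 1 pointwise on B₁ ∩ {x₂ > 0} such that the restriction of w to the segment B₁ ∩ {x₂ = 0} is affine. -/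
/-- The second-order partial derivative `∂²w/∂xᵢ∂xⱼ` within a set `s`. -/
noncomputable def hessEntryWithin (w : EuclideanSpace ℝ (Fin 2) → ℝ)
    (s : Set (EuclideanSpace ℝ (Fin 2))) (x : EuclideanSpace ℝ (Fin 2)) (i j : Fin 2) : ℝ :=
  iteratedFDerivWithin ℝ 2 w s x ![EuclideanSpace.single i 1, EuclideanSpace.single j 1]

/-- The determinant of the Hessian of `w` within a set `s`. -/
noncomputable def detHessWithin (w : EuclideanSpace ℝ (Fin 2) → ℝ)
    (s : Set (EuclideanSpace ℝ (Fin 2))) (x : EuclideanSpace ℝ (Fin 2)) : ℝ :=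
  hessEntryWithin w s x 0 0 * hessEntryWithin w s x 1 1 -
    hessEntryWithin w s x 0 1 * hessEntryWithin w s x 1 0

/-- Lemma 6.1: there is no `C²` convex function `w` on the unit ball `B₁ ⊂ ℝ²` with
`det D²w ≥ 1` on `B₁ ∩ {x₂ > 0}` whose restriction to `B₁ ∩ {x₂ = 0}` is affine. -/
theorem stmt4 :
    ¬ ∃ w : EuclideanSpace ℝ (Fin 2) → ℝ,
      ContDiffOn ℝ 2 w (Metric.ball 0 1) ∧
      ConvexOn ℝ (Metric.ball 0 1) w ∧
      (∀ x ∈ Metric.ball (0 : EuclideanSpace ℝ (Fin 2)) 1, 0 < x 1 →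
        1 ≤ detHessWithin w (Metric.ball 0 1) x) ∧
      (∃ a b : ℝ, ∀ x ∈ Metric.ball (0 : EuclideanSpace ℝ (Fin 2)) 1, x 1 = 0 →
        w x = a * x 0 + b) := by
  rintro ⟨w, hw, -, hdet, a, b, hAff⟩
  set s : Set (EuclideanSpace ℝ (Fin 2)) := Metric.ball 0 1 with hs_def
  have hso : IsOpen s := Metric.isOpen_ball
  have hsu : UniqueDiffOn ℝ s := hso.uniqueDiffOn
  have h0 : (0 : EuclideanSpace ℝ (Fin 2)) ∈ s := by simp [hs_def]
  -- continuity of the Hessian entries and of the determinant on s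
  have hIter : ContinuousOn (iteratedFDerivWithin ℝ 2 w s) s :=
    hw.continuousOn_iteratedFDerivWithin le_rfl hsu
  have hent : ∀ i j : Fin 2, ContinuousOn (fun x => hessEntryWithin w s x i j) s := by
    intro i j
    exact
      (ContinuousMultilinearMap.apply ℝ (fun _ : Fin 2 => EuclideanSpace ℝ (Fin 2)) ℝ
          ![EuclideanSpace.single i 1, EuclideanSpace.single j 1]).continuous.comp_continuousOn
        hIter
  have hcont : ContinuousOn (detHessWithin w s) s := by
    unfold detHessWithin
    exact ((hent 0 0).mul (hent 1 1)).sub ((hent 0 1).mul (hent 1 0))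
  -- the sequence approaching 0 from the upper half plane
  set u : ℕ → EuclideanSpace ℝ (Fin 2) := fun n => ((n : ℝ) + 2)⁻¹ • EuclideanSpace.single (1 : Fin 2) (1 : ℝ)
    with hu_def
  have hpos : ∀ n : ℕ, (0 : ℝ) < ((n : ℝ) + 2)⁻¹ := by
    intro n; positivity
  have humem : ∀ n : ℕ, u n ∈ s := by
    intro n
    have h1 : ‖u n‖ = ((n : ℝ) + 2)⁻¹ := by
      rw [hu_def]
      simp only [norm_smul, EuclideanSpace.norm_single, norm_one, mul_one]
      rw [Real.norm_eq_abs, abs_of_pos (hpos n)]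
    have h2 : ((n : ℝ) + 2)⁻¹ < 1 := by
      rw [inv_lt_one_iff₀]; right; linarith [Nat.cast_nonneg (α := ℝ) n]
    simp [hs_def, mem_ball_zero_iff, h1, h2]
  have hu1 : ∀ n : ℕ, 0 < (u n) 1 := by
    intro n
    have : (u n) 1 = ((n : ℝ) + 2)⁻¹ := by
      rw [hu_def]
      simp [EuclideanSpace.single_apply]
    rw [this]; exact hpos n
  have hulim : Filter.Tendsto u Filter.atTop (nhds 0) := by
    have h1 : Filter.Tendsto (fun n : ℕ => ((n : ℝ) + 2)⁻¹) Filter.atTop (nhds 0) :=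
      tendsto_inv_atTop_zero.comp
        (Filter.tendsto_atTop_add_const_right _ 2 tendsto_natCast_atTop_atTop)
    have := h1.smul_const (EuclideanSpace.single (1 : Fin 2) (1 : ℝ))
    simpa [hu_def] using this
  -- det D²w(0) ≥ 1 by continuity
  have hge : 1 ≤ detHessWithin w s 0 := by
    have htends : Filter.Tendsto (fun n => detHessWithin w s (u n)) Filter.atTop
        (nhds (detHessWithin w s 0)) := by
      apply ((hcont 0 h0).tendsto).comp
      exact tendsto_nhdsWithin_of_tendsto_nhds_of_eventually_within u hulim
        (Filter.Eventually.of_forall humem)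
    exact ge_of_tendsto htends
      (Filter.Eventually.of_forall fun n => hdet (u n) (humem n) (hu1 n))
  -- reduce entries to second fderivWithin
  have key : ∀ i j : Fin 2, hessEntryWithin w s 0 i j =
      fderivWithin ℝ (fderivWithin ℝ w s) s 0 (EuclideanSpace.single i 1)
        (EuclideanSpace.single j 1) := by
    intro i j
    rw [hessEntryWithin, iteratedFDerivWithin_two_apply w hsu h0]
    simp
  -- symmetry of the second derivative
  have hsymm : hessEntryWithin w s 0 0 1 = hessEntryWithin w s 0 1 0 := by
    have hcl : (0 : EuclideanSpace ℝ (Fin 2)) ∈ closure (interior s) := by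
      rw [hso.interior_eq]; exact subset_closure h0
    have h := (hw.contDiffWithinAt h0).isSymmSndFDerivWithinAt (by simp [minSmoothness_of_isRCLikeNormedField]) hsu hcl h0
    rw [key 0 1, key 1 0]
    exact h _ _
  -- h₀₀ = 0 since w is affine along the segment
  have h00 : hessEntryWithin w s 0 0 0 = 0 := by
    set L : ℝ →L[ℝ] EuclideanSpace ℝ (Fin 2) :=
      (ContinuousLinearMap.id ℝ ℝ).smulRight (EuclideanSpace.single (0 : Fin 2) (1 : ℝ))
      with hL_def
    have hLapp : ∀ t : ℝ, L t = t • EuclideanSpace.single (0 : Fin 2) (1 : ℝ) := by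
      intro t; simp [hL_def]
    have hL0 : L 0 ∈ s := by
      have : L 0 = 0 := by rw [hLapp]; simp
      rw [this]; exact h0
    have hUopen : IsOpen (L ⁻¹' s) := hso.preimage L.continuous
    have hU : UniqueDiffOn ℝ (L ⁻¹' s) := hUopen.uniqueDiffOn
    have h0U : (0 : ℝ) ∈ L ⁻¹' s := hL0
    have hcomp := L.iteratedFDerivWithin_comp_right hw hsu hU hL0 (le_refl 2)
    have hL00 : L 0 = 0 := by rw [hLapp]; simp
    rw [hL00] at hcomp
    -- w ∘ L is affine on L ⁻¹' s
    have hEq : Set.EqOn (w ∘ L) (fun t : ℝ => a * t + b) (L ⁻¹' s) := by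
      intro t ht
      have ht' : L t ∈ s := ht
      have hx1 : (L t) 1 = 0 := by
        rw [hLapp]; simp [EuclideanSpace.single_apply]
      have hx0 : (L t) 0 = t := by
        rw [hLapp]; simp [EuclideanSpace.single_apply]
      simp only [Function.comp_apply]
      rw [hAff (L t) ht' hx1, hx0]
    have hone : (![(1 : ℝ), 1] : Fin 2 → ℝ) = fun _ => (1 : ℝ) := by
      funext i; fin_cases i <;> rfl
    have hLone : (fun i : Fin 2 => L ((![(1 : ℝ), 1]) i)) =
        ![EuclideanSpace.single (0 : Fin 2) (1 : ℝ), EuclideanSpace.single 0 1] := by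
      funext i
      fin_cases i <;> · show L 1 = _; rw [hLapp]; simp
    have step1 : hessEntryWithin w s 0 0 0 =
        iteratedFDerivWithin ℝ 2 (w ∘ L) (L ⁻¹' s) 0 ![(1 : ℝ), 1] := by
      rw [hessEntryWithin, hcomp, ContinuousMultilinearMap.compContinuousLinearMap_apply,
        hLone]
    rw [step1, iteratedFDerivWithin_congr hEq h0U,
      iteratedFDerivWithin_of_isOpen 2 hUopen h0U, hone,
      ← iteratedDeriv_eq_iteratedFDeriv]
    have hderiv : deriv (fun t : ℝ => a * t + b) = fun _ => a := by
      funext y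
      have : HasDerivAt (fun t : ℝ => a * t + b) a y := by
        simpa using ((hasDerivAt_id y).const_mul a).add_const b
      exact this.deriv
    rw [show (2 : ℕ) = 1 + 1 from rfl, iteratedDeriv_succ, iteratedDeriv_one, hderiv]
    simp
  -- conclude
  have hval : detHessWithin w s 0 = -(hessEntryWithin w s 0 0 1) ^ 2 := by
    rw [detHessWithin, h00, ← hsymm]; ring
  nlinarith [sq_nonneg (hessEntryWithin w s 0 0 1)]
end

section
/- Let w be a C² convex function on B₁ ⊂ ℝ² with w ≥ 0, w(x₁, 0) = 0 for all |x₁| < 1, and suppose det D²w ≥ 1 on B₁ ∩ {x₂ > 0}. If additionally w(0, t) = o(t) as t → 0⁺, then a contradiction follows; more precisely, for every k > 0 there exists h > 0 with [-1/2,1/2] × [0, 2kh] ⊂ {w < h}, and for k ≥ 9 the comparison principle applied with Q = 8h x₁² + 2k⁻²h⁻¹(x₂ - kh)² on this rectangle yields Q > w ≥ 0 there, contradicting Q(0, kh) = 0. -/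
set_option maxHeartbeats 1000000

open Filter Metric Set Topology

/-- 1-d second derivative test at a local max. -/
lemma aux_secderiv_nonpos (g φ : ℝ → ℝ) (c : ℝ)
    (hg : ∀ᶠ t in nhds (0:ℝ), HasDerivAt g (φ t) t)
    (hφ : HasDerivAt φ c 0) (hmax : IsLocalMax g 0) : c ≤ 0 := by
  by_contra hc
  push_neg at hc
  have hφ0 : φ 0 = 0 := hmax.hasDerivAt_eq_zero hg.self_of_nhds
  have hslope : Tendsto (slope φ 0) (nhdsWithin 0 {(0:ℝ)}ᶜ) (nhds c) :=
    hasDerivAt_iff_tendsto_slope.1 hφ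
  have h1 : ∀ᶠ t in nhdsWithin (0:ℝ) (Ioi 0), 0 < slope φ 0 t :=
    (hslope.mono_left (nhdsWithin_mono _ fun t ht => ne_of_gt ht)).eventually
      (eventually_gt_nhds hc)
  rcases mem_nhdsGT_iff_exists_Ioo_subset.1 h1 with ⟨u, hu, huSub⟩
  rcases Metric.eventually_nhds_iff.1 (hg.and hmax) with ⟨ε, hε, hball⟩
  set t := min (u/2) (ε/2) with htdef
  have hu0 : (0:ℝ) < u := hu
  have ht0 : 0 < t := lt_min (by linarith) (by linarith)
  have htε : t < ε := lt_of_le_of_lt (min_le_right _ _) (by linarith)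
  have hmem : ∀ s ∈ Icc (0:ℝ) t, dist s 0 < ε := by
    intro s hs
    rw [Real.dist_eq, sub_zero, abs_of_nonneg hs.1]
    exact lt_of_le_of_lt hs.2 htε
  have hcont : ContinuousOn g (Icc 0 t) := fun s hs =>
    ((hball (hmem s hs)).1.continuousAt).continuousWithinAt
  have hder : ∀ s ∈ Ioo (0:ℝ) t, HasDerivAt g (φ s) s := fun s hs =>
    (hball (hmem s ⟨hs.1.le, hs.2.le⟩)).1
  obtain ⟨ξ, hξ, hξeq⟩ := exists_hasDerivAt_eq_slope g φ ht0 hcont hder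
  have hgt : g t ≤ g 0 := (hball (hmem t ⟨ht0.le, le_refl t⟩)).2
  have h3 : 0 < slope φ 0 ξ := by
    refine huSub ⟨hξ.1, ?_⟩
    calc ξ < t := hξ.2
    _ ≤ u/2 := min_le_left _ _
    _ < u := by linarith
  rw [slope_def_field, hφ0, sub_zero, sub_zero] at h3
  have hφξ : 0 < φ ξ := by
    have := mul_pos h3 hξ.1
    rwa [div_mul_cancel₀] at this
    exact ne_of_gt hξ.1
  rw [hξeq] at hφξ
  have : (g t - g 0) / (t - 0) ≤ 0 := by
    apply div_nonpos_of_nonpos_of_nonneg <;> linarith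
  linarith

/-- second derivative of a convex function is nonneg. -/
lemma aux_secderiv_nonneg (g φ : ℝ → ℝ) (c ε : ℝ) (hε : 0 < ε)
    (hcv : ConvexOn ℝ (Ioo (-ε) ε) g)
    (hg : ∀ t ∈ Ioo (-ε) ε, HasDerivAt g (φ t) t)
    (hφ : HasDerivAt φ c 0) : 0 ≤ c := by
  have hmono : MonotoneOn (deriv g) (Ioo (-ε) ε) :=
    hcv.monotoneOn_deriv (fun x hx => (hg x hx).differentiableAt)
  have hdg : ∀ t ∈ Ioo (-ε) ε, deriv g t = φ t := fun t ht => (hg t ht).deriv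
  have hslope : Tendsto (slope φ 0) (nhdsWithin 0 {(0:ℝ)}ᶜ) (nhds c) :=
    hasDerivAt_iff_tendsto_slope.1 hφ
  have h0 : (0:ℝ) ∈ Ioo (-ε) ε := ⟨by linarith, hε⟩
  have hev : ∀ᶠ t in nhdsWithin (0:ℝ) {(0:ℝ)}ᶜ, 0 ≤ slope φ 0 t := by
    filter_upwards [eventually_nhdsWithin_of_eventually_nhds
        (isOpen_Ioo.eventually_mem h0), self_mem_nhdsWithin] with t ht hne
    have hne' : t ≠ 0 := hne
    rw [slope_def_field]
    rcases lt_or_gt_of_ne hne' with h | h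
    · have hm := hmono ht h0 h.le
      rw [hdg t ht, hdg 0 h0] at hm
      apply div_nonneg_of_nonpos <;> linarith
    · have hm := hmono h0 ht h.le
      rw [hdg t ht, hdg 0 h0] at hm
      apply div_nonneg <;> linarith
  exact ge_of_tendsto hslope hev

lemma aux_line_hasDerivAt (f : EuclideanSpace ℝ (Fin 2) → ℝ) (x v : EuclideanSpace ℝ (Fin 2)) (t : ℝ)
    (hf : DifferentiableAt ℝ f (x + t • v)) :
    HasDerivAt (fun s : ℝ => f (x + s • v)) (fderiv ℝ f (x + t • v) v) t := by
  have hL : HasDerivAt (fun s : ℝ => x + s • v) v t := by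
    simpa using ((hasDerivAt_id t).smul_const v).const_add x
  exact hf.hasFDerivAt.comp_hasDerivAt t hL

lemma aux_line_phi_hasDerivAt (f : EuclideanSpace ℝ (Fin 2) → ℝ) (x v : EuclideanSpace ℝ (Fin 2))
    (hf : DifferentiableAt ℝ (fderiv ℝ f) x) :
    HasDerivAt (fun s : ℝ => fderiv ℝ f (x + s • v) v)
      (fderiv ℝ (fderiv ℝ f) x v v) 0 := by
  have hL : HasDerivAt (fun s : ℝ => x + s • v) v 0 := by
    simpa using ((hasDerivAt_id (0:ℝ)).smul_const v).const_add x
  have h1 : HasDerivAt (fun s : ℝ => fderiv ℝ f (x + s • v))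
      (fderiv ℝ (fderiv ℝ f) x v) 0 := by
    have hx : x + (0:ℝ) • v = x := by simp
    have hf' : HasFDerivAt (fderiv ℝ f) (fderiv ℝ (fderiv ℝ f) x) (x + (0:ℝ) • v) := by
      rw [hx]; exact hf.hasFDerivAt
    exact hf'.comp_hasDerivAt 0 hL
  have h2 := h1.clm_apply (hasDerivAt_const (0:ℝ) v)
  simpa using h2


/-- The full argument of Lemma 6.1: if `w` is `C²` convex on `B₁ ⊂ ℝ²`, nonnegative,
vanishing on `{x₂ = 0}`, with `det D²w ≥ 1` on `B₁ ∩ {x₂ > 0}` and `w(0, t) = o(t)`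
as `t → 0⁺`, then for every `k > 0` there is `h > 0` with
`[-1/2, 1/2] × [0, 2kh] ⊂ {w < h}`, and a contradiction follows. -/
theorem stmt6 (w : EuclideanSpace ℝ (Fin 2) → ℝ)
    (hreg : ContDiffOn ℝ 2 w (Metric.ball 0 1))
    (hconv : ConvexOn ℝ (Metric.ball 0 1) w)
    (hnonneg : ∀ x ∈ Metric.ball (0 : EuclideanSpace ℝ (Fin 2)) 1, 0 ≤ w x)
    (hzero : ∀ x ∈ Metric.ball (0 : EuclideanSpace ℝ (Fin 2)) 1, x 1 = 0 → w x = 0)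
    (hdet : ∀ x ∈ Metric.ball (0 : EuclideanSpace ℝ (Fin 2)) 1, 0 < x 1 →
      1 ≤ detHessWithin w (Metric.ball 0 1) x)
    (hlittleo : Filter.Tendsto
      (fun t : ℝ => w (EuclideanSpace.single 1 t) / t)
      (nhdsWithin 0 (Set.Ioi 0)) (nhds 0)) :
    (∀ k : ℝ, 0 < k → ∃ h : ℝ, 0 < h ∧
      ∀ x : EuclideanSpace ℝ (Fin 2), |x 0| ≤ 1 / 2 → x 1 ∈ Set.Icc 0 (2 * k * h) →
        x ∈ Metric.ball (0 : EuclideanSpace ℝ (Fin 2)) 1 ∧ w x < h) ∧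
    False := by
  have key : ∀ k : ℝ, 0 < k → ∃ h : ℝ, 0 < h ∧
      ∀ x : EuclideanSpace ℝ (Fin 2), |x 0| ≤ 1 / 2 → x 1 ∈ Set.Icc 0 (2 * k * h) →
        x ∈ Metric.ball (0 : EuclideanSpace ℝ (Fin 2)) 1 ∧ w x < h := by
    intro k hk
    have h1 : ∀ᶠ t in nhdsWithin (0:ℝ) (Ioi 0),
        w (EuclideanSpace.single 1 t) / t < 1/(2*k) :=
      hlittleo.eventually (eventually_lt_nhds (by positivity))
    have h2 : ∀ᶠ t in nhdsWithin (0:ℝ) (Ioi 0), t < 1/2 :=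
      eventually_nhdsWithin_of_eventually_nhds (eventually_lt_nhds (by norm_num))
    have h3 : ∀ᶠ t in nhdsWithin (0:ℝ) (Ioi 0), t ∈ Ioi (0:ℝ) :=
      eventually_mem_nhdsWithin
    obtain ⟨t, hwt, ht2, ht0⟩ := (h1.and (h2.and h3)).exists
    rw [Set.mem_Ioi] at ht0
    refine ⟨t/(6*k), by positivity, ?_⟩
    intro x hx0 hx1
    have htk : 2*k*(t/(6*k)) = t/3 := by field_simp; ring
    rw [htk] at hx1
    obtain ⟨hx1a, hx1b⟩ := hx1
    have hxball : x ∈ Metric.ball (0 : EuclideanSpace ℝ (Fin 2)) 1 := by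
      rw [mem_ball_zero_iff, EuclideanSpace.norm_eq, Fin.sum_univ_two,
        Real.norm_eq_abs, Real.norm_eq_abs]
      rw [show (1:ℝ) = Real.sqrt 1 from (Real.sqrt_one).symm]
      apply Real.sqrt_lt_sqrt (by positivity)
      have h4 : |x 0|^2 ≤ (1/2)^2 := by
        apply pow_le_pow_left₀ (abs_nonneg _) hx0
      have h5 : |x 1|^2 ≤ (t/3)^2 := by
        rw [abs_of_nonneg hx1a]
        apply sq_le_sq' <;> linarith
      nlinarith [sq_nonneg t]
    refine ⟨hxball, ?_⟩
    by_cases hx1z : x 1 = 0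
    · rw [hzero x hxball hx1z]; positivity
    · have hx1pos : 0 < x 1 := lt_of_le_of_ne hx1a (Ne.symm hx1z)
      set l := x 1 / t with hl
      have hl0 : 0 < l := div_pos hx1pos ht0
      have hl3 : l ≤ 1/3 := by rw [hl, div_le_iff₀ ht0]; linarith
      set p := EuclideanSpace.single (1 : Fin 2) t with hp
      set q := EuclideanSpace.single (0 : Fin 2) (x 0 / (1 - l)) with hq
      have hpball : p ∈ Metric.ball (0 : EuclideanSpace ℝ (Fin 2)) 1 := by
        rw [mem_ball_zero_iff, hp, EuclideanSpace.norm_single, Real.norm_eq_abs,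
          abs_of_pos ht0]
        linarith
      have hqball : q ∈ Metric.ball (0 : EuclideanSpace ℝ (Fin 2)) 1 := by
        rw [mem_ball_zero_iff, hq, EuclideanSpace.norm_single, Real.norm_eq_abs, abs_div,
          abs_of_pos (by linarith : (0:ℝ) < 1 - l), div_lt_one (by linarith)]
        calc |x 0| ≤ 1/2 := hx0
          _ < 1 - l := by linarith
      have hlne : (1:ℝ) - l ≠ 0 := by
        have : (0:ℝ) < 1 - l := by linarith
        linarith
      have hxeq : x = (1 - l) • q + l • p := by
        ext i
        have happ : ((1 - l) • q + l • p) i = (1-l) * q i + l * p i := rfl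
        rw [happ]
        fin_cases i
        · rw [hp, hq]
          simp only [EuclideanSpace.single_apply]
          norm_num
          field_simp
        · rw [hp, hq]
          simp only [EuclideanSpace.single_apply]
          norm_num
          rw [hl]
          field_simp
      have hcomb := hconv.2 hqball hpball
        (by linarith : (0:ℝ) ≤ 1 - l) hl0.le (by ring)
      rw [← hxeq] at hcomb
      have hwq : w q = 0 := by
        apply hzero q hqball
        rw [hq]
        simp [EuclideanSpace.single_apply]
      have hwp0 : 0 ≤ w p := hnonneg p hpball
      have hwp : w p < 1/(2*k) * t := (div_lt_iff₀ ht0).1 hwt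
      have h6 : l * w p ≤ (1/3) * w p := mul_le_mul_of_nonneg_right hl3 hwp0
      have e1 : t/(6*k) = (1/3)*(1/(2*k)*t) := by
        rw [div_eq_iff (by positivity : (6:ℝ)*k ≠ 0)]
        field_simp
        norm_num
      calc w x ≤ (1-l) • w q + l • w p := hcomb
        _ = l * w p := by rw [hwq, smul_eq_mul, smul_eq_mul]; ring
        _ < t/(6*k) := by rw [e1]; linarith
  refine ⟨key, ?_⟩
  -- Part 2 : the contradiction
  obtain ⟨h, hh0, hkey⟩ := key 9 (by norm_num)
  set C : ℝ := 2/(81*h) with hC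
  have hC0 : 0 < C := by rw [hC]; positivity
  set Q : EuclideanSpace ℝ (Fin 2) → ℝ :=
    fun x => 8*h*(x 0)^2 + C*(x 1 - 9*h)^2 with hQ
  set u : EuclideanSpace ℝ (Fin 2) → ℝ := fun x => w x - Q x with hu
  set R : Set (EuclideanSpace ℝ (Fin 2)) :=
    {x | |x 0| ≤ 1/2 ∧ x 1 ∈ Icc 0 (2*9*h)} with hR
  have hRball : R ⊆ Metric.ball (0 : EuclideanSpace ℝ (Fin 2)) 1 :=
    fun x hx => (hkey x hx.1 hx.2).1
  have hcont0 : Continuous (fun x : EuclideanSpace ℝ (Fin 2) => x 0) :=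
    (EuclideanSpace.proj (0 : Fin 2) : EuclideanSpace ℝ (Fin 2) →L[ℝ] ℝ).continuous
  have hcont1 : Continuous (fun x : EuclideanSpace ℝ (Fin 2) => x 1) :=
    (EuclideanSpace.proj (1 : Fin 2) : EuclideanSpace ℝ (Fin 2) →L[ℝ] ℝ).continuous
  have hRclosed : IsClosed R := by
    have : R = ((fun x : EuclideanSpace ℝ (Fin 2) => x 0) ⁻¹' Icc (-(1/2)) (1/2)) ∩
        ((fun x : EuclideanSpace ℝ (Fin 2) => x 1) ⁻¹' Icc 0 (2*9*h)) := by
      ext x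
      simp [hR, abs_le, and_assoc]
    rw [this]
    exact (isClosed_Icc.preimage hcont0).inter (isClosed_Icc.preimage hcont1)
  have hRcompact : IsCompact R :=
    Metric.isCompact_of_isClosed_isBounded hRclosed
      ((Metric.isBounded_ball).subset hRball)
  set ctr : EuclideanSpace ℝ (Fin 2) := EuclideanSpace.single (1 : Fin 2) (9*h) with hctr
  have hctr0 : ctr 0 = 0 := by simp [hctr, EuclideanSpace.single_apply]
  have hctr1 : ctr 1 = 9*h := by simp [hctr, EuclideanSpace.single_apply]
  have hctrR : ctr ∈ R := by
    constructor
    · rw [hctr0]; norm_num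
    · rw [hctr1]; constructor <;> nlinarith
  have hQcont : Continuous Q := by
    apply Continuous.add
    · exact continuous_const.mul (hcont0.pow 2)
    · exact continuous_const.mul ((hcont1.sub continuous_const).pow 2)
  have hucont : ContinuousOn u R :=
    (hreg.continuousOn.mono hRball).sub hQcont.continuousOn
  obtain ⟨z, hzR, hzmax⟩ := hRcompact.exists_isMaxOn ⟨ctr, hctrR⟩ hucont
  have hzball : z ∈ Metric.ball (0 : EuclideanSpace ℝ (Fin 2)) 1 := hRball hzR
  have hwz : w z < h := (hkey z hzR.1 hzR.2).2
  have huz : 0 ≤ u z := by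
    have hQctr : Q ctr = 0 := by
      rw [hQ]; simp only [hctr0, hctr1]; ring
    have h1 : 0 ≤ u ctr := by
      rw [hu]; simp only [hQctr]
      simpa using hnonneg ctr (hRball hctrR)
    exact le_trans h1 (hzmax hctrR)
  have hz1R := hzR.2
  -- boundary exclusions
  have hz0lt : |z 0| < 1/2 := by
    rcases lt_or_eq_of_le hzR.1 with hlt | heq
    · exact hlt
    · exfalso
      have h1 : (z 0)^2 = 1/4 := by
        rw [← sq_abs, heq]; norm_num
      have h2 : 0 ≤ C*(z 1 - 9*h)^2 := by positivity
      have : u z < 0 := by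
        rw [hu, hQ]
        simp only
        nlinarith
      linarith
  have hz1pos : 0 < z 1 := by
    rcases lt_or_eq_of_le hz1R.1 with hlt | heq
    · exact hlt
    · exfalso
      have h1 : C*(z 1 - 9*h)^2 = 2*h := by
        rw [← heq, hC]
        field_simp
        ring
      have h2 : 0 ≤ 8*h*(z 0)^2 := by positivity
      have : u z < 0 := by
        rw [hu, hQ]
        simp only
        nlinarith
      linarith
  have hz1lt : z 1 < 2*9*h := by
    rcases lt_or_eq_of_le hz1R.2 with hlt | heq
    · exact hlt
    · exfalso
      have h1 : C*(z 1 - 9*h)^2 = 2*h := by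
        rw [heq, hC]
        field_simp
        ring
      have h2 : 0 ≤ 8*h*(z 0)^2 := by positivity
      have : u z < 0 := by
        rw [hu, hQ]
        simp only
        nlinarith
      linarith
  -- R is a neighborhood of z
  have hRnhds : R ∈ nhds z := by
    have hV : IsOpen (((fun x : EuclideanSpace ℝ (Fin 2) => x 0) ⁻¹' Ioo (-(1/2)) (1/2)) ∩
        ((fun x : EuclideanSpace ℝ (Fin 2) => x 1) ⁻¹' Ioo 0 (2*9*h))) :=
      (isOpen_Ioo.preimage hcont0).inter (isOpen_Ioo.preimage hcont1)
    apply _root_.mem_nhds_iff.2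
    refine ⟨_, ?_, hV, ?_⟩
    · intro x hx
      refine ⟨abs_lt.2 ⟨hx.1.1, hx.1.2⟩ |>.le, ⟨hx.2.1.le, hx.2.2.le⟩⟩
    · have := abs_lt.1 hz0lt
      exact ⟨⟨this.1, this.2⟩, ⟨hz1pos, hz1lt⟩⟩
  -- local max along all lines
  have hline_max : ∀ v : EuclideanSpace ℝ (Fin 2),
      IsLocalMax (fun s : ℝ => u (z + s • v)) 0 := by
    intro v
    have hcont : Continuous (fun s : ℝ => z + s • v) :=
      continuous_const.add (continuous_id.smul continuous_const)
    have hpre : ∀ᶠ s in nhds (0:ℝ), z + s • v ∈ R := by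
      have h0 : z + (0:ℝ) • v = z := by simp
      have := hcont.continuousAt (x := (0:ℝ)) |>.preimage_mem_nhds (by rw [h0]; exact hRnhds)
      exact this
    filter_upwards [hpre] with s hs
    simpa using hzmax hs
  -- differentiability
  have hwdiff : ∀ y ∈ Metric.ball (0 : EuclideanSpace ℝ (Fin 2)) 1,
      DifferentiableAt ℝ w y := fun y hy =>
    (hreg.contDiffAt (isOpen_ball.mem_nhds hy)).differentiableAt two_ne_zero
  have hD : DifferentiableAt ℝ (fderiv ℝ w) z := by
    have h2 : ContDiffAt ℝ 2 w z := hreg.contDiffAt (isOpen_ball.mem_nhds hzball)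
    exact (h2.fderiv_right (m := 1) (by norm_num)).differentiableAt one_ne_zero
  set δ : ℝ := 1 - ‖z‖ with hδdef
  have hδ : 0 < δ := by
    rw [hδdef]
    have := mem_ball_zero_iff.1 hzball
    linarith
  have hmem : ∀ v : EuclideanSpace ℝ (Fin 2), ‖v‖ = 1 → ∀ s : ℝ, |s| < δ →
      z + s • v ∈ Metric.ball (0 : EuclideanSpace ℝ (Fin 2)) 1 := by
    intro v hv s hs
    rw [mem_ball_zero_iff]
    calc ‖z + s • v‖ ≤ ‖z‖ + ‖s • v‖ := norm_add_le _ _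
      _ = ‖z‖ + |s| := by rw [norm_smul, hv, Real.norm_eq_abs, mul_one]
      _ < 1 := by rw [hδdef] at hs; linarith
  -- convexity of w along lines through z
  have hconvline : ∀ v : EuclideanSpace ℝ (Fin 2), ‖v‖ = 1 →
      ConvexOn ℝ (Ioo (-δ) δ) (fun s : ℝ => w (z + s • v)) := by
    intro v hv
    refine ⟨convex_Ioo _ _, ?_⟩
    intro a ha b hb μ ν hμ hν hμν
    have hrw : z + (μ • a + ν • b) • v = μ • (z + a • v) + ν • (z + b • v) := by
      simp only [smul_eq_mul]
      calc z + (μ*a + ν*b) • v = (μ+ν) • z + ((μ*a) • v + (ν*b) • v) := by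
            rw [hμν, one_smul, add_smul]
        _ = μ • z + μ • (a • v) + (ν • z + ν • (b • v)) := by
            rw [add_smul, smul_smul, smul_smul]; abel
        _ = μ • (z + a • v) + ν • (z + b • v) := by rw [smul_add, smul_add]
    show w (z + (μ • a + ν • b) • v) ≤ μ • w (z + a • v) + ν • w (z + b • v)
    rw [hrw]
    exact hconv.2 (hmem v hv a (abs_lt.2 ⟨ha.1, ha.2⟩))
      (hmem v hv b (abs_lt.2 ⟨hb.1, hb.2⟩)) hμ hν hμν
  have hDnonneg : ∀ v : EuclideanSpace ℝ (Fin 2), ‖v‖ = 1 →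
      0 ≤ fderiv ℝ (fderiv ℝ w) z v v := by
    intro v hv
    refine aux_secderiv_nonneg (fun s : ℝ => w (z + s • v))
      (fun s => fderiv ℝ w (z + s • v) v) _ δ hδ (hconvline v hv) ?_
      (aux_line_phi_hasDerivAt w z v hD)
    intro s hs
    exact aux_line_hasDerivAt w z v s (hwdiff _ (hmem v hv s (abs_lt.2 ⟨hs.1, hs.2⟩)))
  set e0 : EuclideanSpace ℝ (Fin 2) := EuclideanSpace.single (0 : Fin 2) (1:ℝ) with he0
  set e1 : EuclideanSpace ℝ (Fin 2) := EuclideanSpace.single (1 : Fin 2) (1:ℝ) with he1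
  have hne0 : ‖e0‖ = 1 := by rw [he0, EuclideanSpace.norm_single]; simp
  have hne1 : ‖e1‖ = 1 := by rw [he1, EuclideanSpace.norm_single]; simp
  -- coordinates along lines
  have hc00 : ∀ s : ℝ, (z + s • e0) 0 = z 0 + s := by
    intro s
    have : (z + s • e0) 0 = z 0 + s * e0 0 := rfl
    rw [this, he0]
    simp [EuclideanSpace.single_apply]
  have hc01 : ∀ s : ℝ, (z + s • e0) 1 = z 1 := by
    intro s
    have : (z + s • e0) 1 = z 1 + s * e0 1 := rfl
    rw [this, he0]
    simp [EuclideanSpace.single_apply]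
  have hc10 : ∀ s : ℝ, (z + s • e1) 0 = z 0 := by
    intro s
    have : (z + s • e1) 0 = z 0 + s * e1 0 := rfl
    rw [this, he1]
    simp [EuclideanSpace.single_apply]
  have hc11 : ∀ s : ℝ, (z + s • e1) 1 = z 1 + s := by
    intro s
    have : (z + s • e1) 1 = z 1 + s * e1 1 := rfl
    rw [this, he1]
    simp [EuclideanSpace.single_apply]
  -- derivative of Q along e0
  have hq0 : ∀ s : ℝ, HasDerivAt (fun s' : ℝ => Q (z + s' • e0)) (8*h*(2*(z 0 + s))) s := by
    intro s
    have hfe : (fun s' : ℝ => Q (z + s' • e0)) =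
        (fun s' : ℝ => 8*h*(z 0 + s')^2 + C*(z 1 - 9*h)^2) := by
      funext s'
      rw [hQ]
      simp only [hc00 s', hc01 s']
    rw [hfe]
    have h1 : HasDerivAt (fun s' : ℝ => z 0 + s') 1 s := (hasDerivAt_id s).const_add _
    have h2 := ((h1.pow 2).const_mul (8*h)).add_const (C*(z 1 - 9*h)^2)
    exact h2.congr_deriv (by ring)
  have hq1 : ∀ s : ℝ, HasDerivAt (fun s' : ℝ => Q (z + s' • e1)) (C*(2*(z 1 + s - 9*h))) s := by
    intro s
    have hfe : (fun s' : ℝ => Q (z + s' • e1)) =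
        (fun s' : ℝ => C*(z 1 + s' - 9*h)^2 + 8*h*(z 0)^2) := by
      funext s'
      rw [hQ]
      simp only [hc10 s', hc11 s']
      ring
    rw [hfe]
    have h1 : HasDerivAt (fun s' : ℝ => z 1 + s' - 9*h) 1 s := by
      simpa using (((hasDerivAt_id s).const_add (z 1)).sub_const (9*h))
    have h2 := ((h1.pow 2).const_mul C).add_const (8*h*(z 0)^2)
    exact h2.congr_deriv (by ring)
  have habs : ∀ᶠ s in nhds (0:ℝ), |s| < δ := by
    have := eventually_abs_sub_lt (0:ℝ) hδ
    simpa using this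
  -- second derivative bounds from the max
  have hbound0 : fderiv ℝ (fderiv ℝ w) z e0 e0 ≤ 16*h := by
    have hmax := hline_max e0
    have hev : ∀ᶠ s in nhds (0:ℝ), HasDerivAt (fun s' : ℝ => u (z + s' • e0))
        (fderiv ℝ w (z + s • e0) e0 - 8*h*(2*(z 0 + s))) s := by
      filter_upwards [habs] with s hs
      exact (aux_line_hasDerivAt w z e0 s (hwdiff _ (hmem e0 hne0 s hs))).sub (hq0 s)
    have hψ : HasDerivAt (fun s : ℝ => fderiv ℝ w (z + s • e0) e0 - 8*h*(2*(z 0 + s)))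
        (fderiv ℝ (fderiv ℝ w) z e0 e0 - 16*h) 0 := by
      have h1 := aux_line_phi_hasDerivAt w z e0 hD
      have h2 : HasDerivAt (fun s : ℝ => 8*h*(2*(z 0 + s))) (16*h) 0 := by
        have base : HasDerivAt (fun s : ℝ => z 0 + s) 1 0 := (hasDerivAt_id 0).const_add _
        have h3 := (base.const_mul (2:ℝ)).const_mul (8*h)
        exact h3.congr_deriv (by ring)
      exact h1.sub h2
    have := aux_secderiv_nonpos _ _ _ hev hψ hmax
    linarith
  have hbound1 : fderiv ℝ (fderiv ℝ w) z e1 e1 ≤ 2*C := by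
    have hmax := hline_max e1
    have hev : ∀ᶠ s in nhds (0:ℝ), HasDerivAt (fun s' : ℝ => u (z + s' • e1))
        (fderiv ℝ w (z + s • e1) e1 - C*(2*(z 1 + s - 9*h))) s := by
      filter_upwards [habs] with s hs
      exact (aux_line_hasDerivAt w z e1 s (hwdiff _ (hmem e1 hne1 s hs))).sub (hq1 s)
    have hψ : HasDerivAt (fun s : ℝ => fderiv ℝ w (z + s • e1) e1 - C*(2*(z 1 + s - 9*h)))
        (fderiv ℝ (fderiv ℝ w) z e1 e1 - 2*C) 0 := by
      have h1 := aux_line_phi_hasDerivAt w z e1 hD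
      have h2 : HasDerivAt (fun s : ℝ => C*(2*(z 1 + s - 9*h))) (2*C) 0 := by
        have base : HasDerivAt (fun s : ℝ => z 1 + s - 9*h) 1 0 := by
          simpa using ((hasDerivAt_id (0:ℝ)).const_add (z 1)).sub_const (9*h)
        have h3 := (base.const_mul (2:ℝ)).const_mul C
        exact h3.congr_deriv (by ring)
      exact h1.sub h2
    have := aux_secderiv_nonpos _ _ _ hev hψ hmax
    linarith
  -- hessian entries
  have hiter : ∀ i j : Fin 2, hessEntryWithin w (Metric.ball 0 1) z i j =
      fderiv ℝ (fderiv ℝ w) z (EuclideanSpace.single i 1) (EuclideanSpace.single j 1) := by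
    intro i j
    rw [hessEntryWithin, iteratedFDerivWithin_of_isOpen 2 isOpen_ball hzball,
      iteratedFDeriv_two_apply]
    simp
  have hsymm : fderiv ℝ (fderiv ℝ w) z e0 e1 = fderiv ℝ (fderiv ℝ w) z e1 e0 := by
    have hev : ∀ᶠ y in nhds z, HasFDerivAt w (fderiv ℝ w y) y := by
      filter_upwards [isOpen_ball.mem_nhds hzball] with y hy
      exact (hwdiff y hy).hasFDerivAt
    exact second_derivative_symmetric_of_eventually hev hD.hasFDerivAt e0 e1
  have hdetz := hdet z hzball hz1pos
  rw [detHessWithin, hiter 0 0, hiter 1 1, hiter 0 1, hiter 1 0] at hdetz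
  rw [← he0, ← he1] at hdetz
  have ha0 := hDnonneg e0 hne0
  have ha1 := hDnonneg e1 hne1
  have hhne : h ≠ 0 := ne_of_gt hh0
  have hCval : 16*h*(2*C) = 64/81 := by
    rw [hC]
    field_simp
    ring
  rw [← hsymm] at hdetz
  have hac : (fderiv ℝ (fderiv ℝ w) z e0 e0) * (fderiv ℝ (fderiv ℝ w) z e1 e1) ≤ 16*h*(2*C) :=
    mul_le_mul hbound0 hbound1 ha1 (by positivity)
  rw [hCval] at hac
  linarith [mul_self_nonneg (fderiv ℝ (fderiv ℝ w) z e0 e1), hac, hdetz]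
end
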